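/- arXiv:2110.04675 — 2 statements merged into one kernel-verified Lean document; each statement's English description precedes it below -/
import Mathlib

section
/- Let n ≥ 1, let H be a Hermitian n×n complex matrix, let E₀ be the smallest eigenvalue of H, and let ρ be a density matrix (a positive semidefinite n×n complex matrix with trace 1). Then the following are equivalent: (i) for every n×n complex matrix A, the trace Tr(ρ · A* · (H·A − A·H)) is a nonnegative real number; (ii) H · ρ = E₀ • ρ (equivalently, the range of ρ is contained in the E₀-eigenspace of H). -/
open Matrix
open scoped ComplexOrder

open scoped MatrixOrder Matrix.Norms.L2Operator in
lemma posSemidef_iff_eq_transpose_mul_self {n : ℕ} {A : Matrix (Fin n) (Fin n) ℂ} :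
    A.PosSemidef ↔ ∃ B : Matrix (Fin n) (Fin n) ℂ, A = Bᴴ * B := by
  constructor
  · intro h
    obtain ⟨B, hB⟩ := CStarAlgebra.nonneg_iff_eq_star_mul_self.mp h.nonneg
    exact ⟨B, hB⟩
  · rintro ⟨B, rfl⟩
    exact posSemidef_conjTranspose_mul_self B

lemma gs_trace_nonneg {n : ℕ} {B : Matrix (Fin n) (Fin n) ℂ}
    (hB : B.PosSemidef) : 0 ≤ B.trace := by
  have h : ∀ i, 0 ≤ B i i := fun i => by
    simpa [mulVec_single, dotProduct, Pi.single_apply] using hB.dotProduct_mulVec_nonneg (Pi.single i 1)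
  exact Finset.sum_nonneg fun i _ => h i

lemma gs_trace_mul_nonneg {n : ℕ} {P B : Matrix (Fin n) (Fin n) ℂ}
    (hP : P.PosSemidef) (hB : B.PosSemidef) : 0 ≤ (P * B).trace := by
  obtain ⟨C, rfl⟩ := posSemidef_iff_eq_transpose_mul_self.mp hP
  rw [Matrix.mul_assoc, trace_mul_comm]
  exact gs_trace_nonneg (by simpa using hB.mul_mul_conjTranspose_same C)

lemma gs_psd_trace_zero {n : ℕ} {B : Matrix (Fin n) (Fin n) ℂ}
    (hB : B.PosSemidef) (h : B.trace = 0) : B = 0 := by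
  obtain ⟨C, rfl⟩ := posSemidef_iff_eq_transpose_mul_self.mp hB
  suffices hC : C = 0 by simp [hC]
  have hdiag : ∀ i, (Cᴴ * C) i i = 0 := by
    have := (Finset.sum_eq_zero_iff_of_nonneg (fun i _ =>
      by simpa [mulVec_single, dotProduct, Pi.single_apply] using
        (posSemidef_conjTranspose_mul_self C).dotProduct_mulVec_nonneg (Pi.single i 1))).mp h
    exact fun i => this i (Finset.mem_univ i)
  ext i j
  have := hdiag j
  rw [Matrix.mul_apply] at this
  have h2 : dotProduct (star fun k => C k j) (fun k => C k j) = 0 := by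
    simpa [dotProduct, conjTranspose_apply] using this
  have := dotProduct_star_self_eq_zero.mp h2
  simpa using congr_fun this i

lemma gs_trace_vecMulVec {n : ℕ} (B : Matrix (Fin n) (Fin n) ℂ) (y u : Fin n → ℂ) :
    (B * vecMulVec y u).trace = u ⬝ᵥ B *ᵥ y := by
  simp only [Matrix.trace, Matrix.diag, Matrix.mul_apply, vecMulVec_apply, dotProduct,
    mulVec, Finset.mul_sum, Finset.sum_mul]
  exact Finset.sum_congr rfl fun j _ => Finset.sum_congr rfl fun i _ => by ring

lemma gs_vecMulVec_conjT {n : ℕ} (x y : Fin n → ℂ) :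
    (vecMulVec x (star y))ᴴ = vecMulVec y (star x) := by
  ext i j
  simp [vecMulVec_apply, conjTranspose_apply, mul_comm]

lemma gs_mul_vecMulVec {n : ℕ} (B : Matrix (Fin n) (Fin n) ℂ) (x u : Fin n → ℂ) :
    B * vecMulVec x u = vecMulVec (B *ᵥ x) u := by
  ext i j
  simp [Matrix.mul_apply, vecMulVec_apply, mulVec, dotProduct, Finset.sum_mul, mul_assoc]

lemma gs_vecMulVec_mul {n : ℕ} (B : Matrix (Fin n) (Fin n) ℂ) (x u : Fin n → ℂ) :
    vecMulVec x u * B = vecMulVec x (u ᵥ* B) := by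
  ext i j
  simp [Matrix.mul_apply, vecMulVec_apply, vecMul, dotProduct, Finset.mul_sum, mul_assoc]

lemma gs_vecMulVec_mul_vecMulVec {n : ℕ} (a u b v : Fin n → ℂ) :
    vecMulVec a u * vecMulVec b v = (u ⬝ᵥ b) • vecMulVec a v := by
  ext i j
  simp [Matrix.mul_apply, vecMulVec_apply, dotProduct, Finset.mul_sum, Finset.sum_mul]
  exact Finset.sum_congr rfl fun k _ => by ring

-- K = H - E₀ • 1 is PSD
lemma gs_K_psd {n : ℕ} (H : Matrix (Fin n) (Fin n) ℂ) (hH : H.IsHermitian) (E₀ : ℝ)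
    (hE₀min : ∀ (μ : ℝ) (v : Fin n → ℂ), v ≠ 0 → H.mulVec v = (μ : ℂ) • v → E₀ ≤ μ) :
    (H - (E₀ : ℂ) • 1).PosSemidef := by
  have hK : (H - (E₀ : ℂ) • 1).IsHermitian := by
    unfold Matrix.IsHermitian
    rw [conjTranspose_sub, conjTranspose_smul, conjTranspose_one, hH]
    norm_num
  refine hK.posSemidef_iff_eigenvalues_nonneg.mpr fun i => ?_
  set v : Fin n → ℂ := ⇑(hK.eigenvectorBasis i) with hv
  have hvne : v ≠ 0 := by
    intro h0
    exact hK.eigenvectorBasis.orthonormal.ne_zero i (by ext j; exact congr_fun h0 j)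
  have hmv : (H - (E₀ : ℂ) • 1) *ᵥ v = ((hK.eigenvalues i : ℂ)) • v := by
    have := hK.mulVec_eigenvectorBasis i
    rw [← hv] at this
    rw [this]
    ext j
    simp [Complex.real_smul]
  have hmv' : H *ᵥ v = (((hK.eigenvalues i + E₀ : ℝ)) : ℂ) • v := by
    have h1 : H *ᵥ v = (H - (E₀ : ℂ) • 1) *ᵥ v + (E₀ : ℂ) • v := by
      rw [sub_mulVec]
      simp [smul_mulVec]
    rw [h1, hmv]
    ext j
    push_cast
    simp only [Pi.smul_apply, smul_eq_mul, Pi.add_apply]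
    ring
  have := hE₀min _ v hvne hmv'
  simp only [Pi.zero_apply]
  linarith

lemma gs_conj_qf {n : ℕ} (M : Matrix (Fin n) (Fin n) ℂ) (y : Fin n → ℂ) :
    star y ⬝ᵥ Mᴴ *ᵥ y = star (star y ⬝ᵥ M *ᵥ y) := by
  rw [Matrix.dotProduct_mulVec, star_dotProduct]
  rw [star_mulVec, star_star]

lemma gs_hermitian_of_qf {n : ℕ} {M : Matrix (Fin n) (Fin n) ℂ}
    (h : ∀ y : Fin n → ℂ, 0 ≤ star y ⬝ᵥ M *ᵥ y) : M.IsHermitian := by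
  have hQ : M - Mᴴ = 0 := by
    have hT : Matrix.toEuclideanLin (M - Mᴴ) = 0 := by
      rw [← inner_map_self_eq_zero]
      intro x
      set y : Fin n → ℂ := (WithLp.equiv 2 _) x with hy
      have hq : star y ⬝ᵥ (M - Mᴴ) *ᵥ y = 0 := by
        have h1 := h y
        have him : (star y ⬝ᵥ M *ᵥ y).im = 0 := by
          rw [Complex.nonneg_iff] at h1; exact h1.2.symm
        have hconj : star (star y ⬝ᵥ M *ᵥ y) = star y ⬝ᵥ M *ᵥ y :=
          Complex.conj_eq_iff_im.mpr him
        rw [sub_mulVec, dotProduct_sub, gs_conj_qf, hconj, sub_self]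
      calc inner ℂ (Matrix.toEuclideanLin (M - Mᴴ) x) x
          = star ((M - Mᴴ) *ᵥ y) ⬝ᵥ y := by
            rw [EuclideanSpace.inner_eq_star_dotProduct, dotProduct_comm]
            rfl
        _ = star (star y ⬝ᵥ (M - Mᴴ) *ᵥ y) := by
            rw [star_dotProduct]
        _ = 0 := by rw [hq, star_zero]
    exact (LinearEquiv.map_eq_zero_iff _).mp hT
  exact (sub_eq_zero.mp hQ).symm

/-- A density matrix `ρ` is a ground state of a Hermitian `H` with smallest
eigenvalue `E₀` (i.e. `Tr(ρ A* (HA - AH)) ≥ 0` for all `A`) iff `H ρ = E₀ ρ`. -/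
theorem ground_state_iff_support {n : ℕ} (hn : 1 ≤ n)
    (H ρ : Matrix (Fin n) (Fin n) ℂ) (hH : H.IsHermitian) (E₀ : ℝ)
    (hE₀ : ∃ v : Fin n → ℂ, v ≠ 0 ∧ H.mulVec v = (E₀ : ℂ) • v)
    (hE₀min : ∀ (μ : ℝ) (v : Fin n → ℂ), v ≠ 0 → H.mulVec v = (μ : ℂ) • v → E₀ ≤ μ)
    (hρ : ρ.PosSemidef) (htr : ρ.trace = 1) :
    (∀ A : Matrix (Fin n) (Fin n) ℂ,
        0 ≤ (ρ * Aᴴ * (H * A - A * H)).trace) ↔ H * ρ = (E₀ : ℂ) • ρ := by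
  have hK : (H - (E₀ : ℂ) • 1).PosSemidef := gs_K_psd H hH E₀ hE₀min
  constructor
  · intro h
    obtain ⟨x, hxne, hx⟩ := hE₀
    set c : ℂ := star x ⬝ᵥ x with hc
    have hcne : c ≠ 0 := by
      intro h0
      exact hxne (dotProduct_star_self_eq_zero.mp h0)
    have hcnn : 0 ≤ c := by
      rw [hc]
      exact Finset.sum_nonneg fun i _ => by
        simpa using star_mul_self_nonneg (x i)
    have hcpos : 0 < c := lt_of_le_of_ne hcnn (Ne.symm hcne)
    set M : Matrix (Fin n) (Fin n) ℂ := (E₀ : ℂ) • ρ - H * ρ with hM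
    have hq : ∀ y : Fin n → ℂ, 0 ≤ star y ⬝ᵥ M *ᵥ y := by
      intro y
      have h1 := h (vecMulVec x (star y))
      rw [gs_vecMulVec_conjT] at h1
      rw [Matrix.mul_sub, trace_sub] at h1
      have e1 : ρ * vecMulVec y (star x) * (H * vecMulVec x (star y))
          = (E₀ * c) • (ρ * vecMulVec y (star y)) := by
        rw [gs_mul_vecMulVec H x (star y), hx, Matrix.mul_assoc,
          gs_vecMulVec_mul_vecMulVec]
        rw [dotProduct_smul, ← hc, Matrix.mul_smul]
        congr 1
      have e2 : ρ * vecMulVec y (star x) * (vecMulVec x (star y) * H)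
          = c • (ρ * vecMulVec y (star (y) ᵥ* H)) := by
        rw [gs_vecMulVec_mul H x (star y), Matrix.mul_assoc,
          gs_vecMulVec_mul_vecMulVec, ← hc, Matrix.mul_smul]
      rw [e1, e2, trace_smul, trace_smul, gs_trace_vecMulVec, gs_trace_vecMulVec] at h1
      have e3 : (star y ᵥ* H) ⬝ᵥ ρ *ᵥ y = star y ⬝ᵥ (H * ρ) *ᵥ y := by
        rw [← Matrix.dotProduct_mulVec, Matrix.mulVec_mulVec]
      rw [e3] at h1
      have e4 : star y ⬝ᵥ M *ᵥ y
          = E₀ * (star y ⬝ᵥ ρ *ᵥ y) - star y ⬝ᵥ (H * ρ) *ᵥ y := by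
        rw [hM, sub_mulVec, dotProduct_sub, smul_mulVec, dotProduct_smul,
          smul_eq_mul]
      rw [e4]
      have h2 : 0 ≤ c * (E₀ * (star y ⬝ᵥ ρ *ᵥ y) - star y ⬝ᵥ (H * ρ) *ᵥ y) := by
        rw [smul_eq_mul, smul_eq_mul] at h1
        convert h1 using 1
        ring
      set q : ℂ := E₀ * (star y ⬝ᵥ ρ *ᵥ y) - star y ⬝ᵥ (H * ρ) *ᵥ y
      rw [Complex.pos_iff] at hcpos
      rw [Complex.nonneg_iff] at h2 ⊢
      obtain ⟨hcre, hcim⟩ := hcpos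
      have hre : (c * q).re = c.re * q.re := by
        simp [Complex.mul_re, ← hcim]
      have him : (c * q).im = c.re * q.im := by
        simp [Complex.mul_im, ← hcim]
      have him0 : q.im = 0 := by
        have h3 : c.re * q.im = 0 := by rw [← him]; exact h2.2.symm
        rcases mul_eq_zero.mp h3 with h' | h'
        · exact absurd h' hcre.ne'
        · exact h'
      refine ⟨?_, him0.symm⟩
      have h4 := h2.1
      rw [hre] at h4
      nlinarith
    have hMherm : M.IsHermitian := gs_hermitian_of_qf hq
    have hMpsd : M.PosSemidef := PosSemidef.of_dotProduct_mulVec_nonneg hMherm hq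
    have htrK : 0 ≤ (ρ * (H - (E₀ : ℂ) • 1)).trace := gs_trace_mul_nonneg hρ hK
    have htrM : M.trace = 0 := by
      have e5 : M.trace = -(ρ * (H - (E₀ : ℂ) • 1)).trace := by
        rw [hM, trace_sub, trace_smul, htr, Matrix.mul_sub, trace_sub,
          trace_mul_comm ρ H, Matrix.mul_smul, Matrix.mul_one, trace_smul, htr]
        simp
      have h6 := gs_trace_nonneg hMpsd
      rw [e5] at h6 ⊢
      have : (ρ * (H - (E₀ : ℂ) • 1)).trace = 0 := le_antisymm (by simpa using h6) htrK
      rw [this, neg_zero]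
    have hM0 : M = 0 := gs_psd_trace_zero hMpsd htrM
    have : (E₀ : ℂ) • ρ - H * ρ = 0 := hM0
    exact (sub_eq_zero.mp this).symm
  · intro hHρ A
    have key : (ρ * Aᴴ * (H * A - A * H)).trace
        = (ρ * (Aᴴ * (H - (E₀ : ℂ) • 1) * A)).trace := by
      have e1 : Aᴴ * (H - (E₀ : ℂ) • 1) * A = Aᴴ * (H * A) - (E₀ : ℂ) • (Aᴴ * A) := by
        rw [Matrix.mul_sub, Matrix.sub_mul, Matrix.mul_smul, Matrix.mul_one,
          Matrix.smul_mul, Matrix.mul_assoc]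
      rw [e1, Matrix.mul_sub, trace_sub, Matrix.mul_sub, trace_sub, Matrix.mul_assoc]
      congr 1
      rw [Matrix.mul_smul, trace_smul]
      have e2 : (ρ * Aᴴ * (A * H)).trace = ((H * ρ) * (Aᴴ * A)).trace := by
        rw [← Matrix.mul_assoc, ← Matrix.mul_assoc, trace_mul_comm, ← Matrix.mul_assoc,
          ← Matrix.mul_assoc]
      rw [e2, hHρ, Matrix.smul_mul, trace_smul]
    rw [key]
    exact gs_trace_mul_nonneg hρ (hK.conjTranspose_mul_mul_same A)
end

section
/- Let n ≥ 1, let H be a Hermitian n×n complex matrix with smallest eigenvalue E₀, and let ρ be a density matrix (positive semidefinite with trace 1) such that for every n×n complex matrix A the trace Tr(ρ · A* · (H·A − A·H)) is a nonnegative real number. Then for every eigenvector η of H with eigenvalue E > E₀ one has ⟨η, ρ η⟩ = 0. (In the proof one takes a unit eigenvector ξ with Hξ = E₀ξ and the rank-one matrix A sending ζ to ⟨η,ζ⟩ξ, for which −i Tr(ρ A* i[H,A]) = (E₀ − E)⟨η, ρ η⟩.) -/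
open Matrix
open scoped ComplexOrder

private lemma mul_vecMulVec' {n : ℕ} (M : Matrix (Fin n) (Fin n) ℂ) (u v : Fin n → ℂ) :
    M * vecMulVec u v = vecMulVec (M.mulVec u) v := by
  ext i j
  simp [mul_apply, vecMulVec_apply, mulVec, dotProduct, Finset.sum_mul, mul_assoc]

private lemma vecMulVec_mul' {n : ℕ} (M : Matrix (Fin n) (Fin n) ℂ) (u v : Fin n → ℂ) :
    vecMulVec u v * M = vecMulVec u (v ᵥ* M) := by
  ext i j
  simp [mul_apply, vecMulVec_apply, vecMul, dotProduct, Finset.mul_sum, mul_assoc]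

private lemma conjTranspose_vecMulVec' {n : ℕ} (u v : Fin n → ℂ) :
    (vecMulVec u v)ᴴ = vecMulVec (star v) (star u) := by
  ext i j
  simp [conjTranspose_apply, vecMulVec_apply, mul_comm]

private lemma vecMulVec_smul_left {n : ℕ} (c : ℂ) (u v : Fin n → ℂ) :
    vecMulVec (c • u) v = c • vecMulVec u v := by
  ext i j
  simp [vecMulVec_apply, mul_assoc]

private lemma vecMulVec_smul_right {n : ℕ} (c : ℂ) (u v : Fin n → ℂ) :
    vecMulVec u (c • v) = c • vecMulVec u v := by
  ext i j
  simp [vecMulVec_apply]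
  ring

private lemma trace_vecMulVec' {n : ℕ} (u v : Fin n → ℂ) :
    (vecMulVec u v).trace = v ⬝ᵥ u := by
  simp [trace, diag, vecMulVec_apply, dotProduct, mul_comm]

private lemma vecMul_vecMulVec' {n : ℕ} (w u v : Fin n → ℂ) :
    w ᵥ* vecMulVec u v = (w ⬝ᵥ u) • v := by
  ext j
  simp [vecMul, vecMulVec_apply, dotProduct, Finset.sum_mul, mul_assoc]

/-- If the density matrix `ρ` is a ground state of the Hermitian matrix `H`
(with smallest eigenvalue `E₀`), i.e. `Tr(ρ A* (HA - AH)) ≥ 0` for all `A`,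
then `⟨η, ρ η⟩ = 0` for every eigenvector `η` of `H` with eigenvalue `E > E₀`. -/
theorem ground_state_vanishes_on_excited {n : ℕ} (hn : 1 ≤ n)
    (H ρ : Matrix (Fin n) (Fin n) ℂ) (hH : H.IsHermitian) (E₀ : ℝ)
    (hE₀ : ∃ v : Fin n → ℂ, v ≠ 0 ∧ H.mulVec v = (E₀ : ℂ) • v)
    (hE₀min : ∀ (μ : ℝ) (v : Fin n → ℂ), v ≠ 0 → H.mulVec v = (μ : ℂ) • v → E₀ ≤ μ)
    (hρ : ρ.PosSemidef) (htr : ρ.trace = 1)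
    (hgs : ∀ A : Matrix (Fin n) (Fin n) ℂ,
        0 ≤ (ρ * Aᴴ * (H * A - A * H)).trace) :
    ∀ (E : ℝ) (η : Fin n → ℂ), E₀ < E → H.mulVec η = (E : ℂ) • η →
      star η ⬝ᵥ ρ.mulVec η = 0 := by
  intro E η hE hη
  obtain ⟨ξ, hξ0, hξ⟩ := hE₀
  set A : Matrix (Fin n) (Fin n) ℂ := vecMulVec ξ (star η) with hA
  set q : ℂ := star η ⬝ᵥ ρ.mulVec η with hq
  set c : ℂ := star ξ ⬝ᵥ ξ with hc
  have hHA : H * A = (E₀ : ℂ) • A := by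
    rw [hA, mul_vecMulVec', hξ, vecMulVec_smul_left]
  have hvm : (star η) ᵥ* H = (E : ℂ) • star η := by
    have h1 : (star η) ᵥ* Hᴴ = star (H.mulVec η) := (star_mulVec H η).symm
    rw [hH.eq] at h1
    rw [h1, hη, star_smul]
    simp
  have hAH : A * H = (E : ℂ) • A := by
    rw [hA, vecMulVec_mul', hvm, vecMulVec_smul_right]
  have hAconj : Aᴴ = vecMulVec η (star ξ) := by
    rw [hA, conjTranspose_vecMulVec', star_star]
  have hmv : vecMulVec η (star ξ) *ᵥ ξ = c • η := by
    ext i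
    simp only [mulVec, vecMulVec_apply, dotProduct, hc, Pi.smul_apply, smul_eq_mul,
      Finset.sum_mul]
    exact Finset.sum_congr rfl fun k _ => by ring
  have hmul : ρ * Aᴴ * A = c • vecMulVec (ρ.mulVec η) (star η) := by
    rw [hAconj, hA, mul_vecMulVec', ← Matrix.mulVec_mulVec, hmv, mulVec_smul,
      vecMulVec_smul_left]
  have key : (ρ * Aᴴ * (H * A - A * H)).trace = ((E₀ : ℂ) - E) * (c * q) := by
    rw [hHA, hAH, ← sub_smul, Matrix.mul_smul, trace_smul, hmul, trace_smul,
      trace_vecMulVec', ← hq]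
    simp [mul_assoc]
  have h0 := hgs A
  rw [key] at h0
  have hqnn : 0 ≤ q := hρ.dotProduct_mulVec_nonneg η
  have hcpos : 0 < c := dotProduct_star_self_pos_iff.mpr hξ0
  rw [Complex.le_def] at hqnn h0
  rw [Complex.lt_def] at hcpos
  obtain ⟨hqre, hqim⟩ := hqnn
  obtain ⟨hcre, hcim⟩ := hcpos
  simp only [Complex.zero_re, Complex.zero_im] at hqre hqim hcre hcim h0
  have hre := h0.1
  simp only [Complex.mul_re, Complex.mul_im, Complex.sub_re, Complex.sub_im,
    Complex.ofReal_re, Complex.ofReal_im, ← hqim, ← hcim] at hre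
  have hq0 : q.re = 0 := by
    rcases lt_or_eq_of_le hqre with h | h
    · exfalso
      ring_nf at hre
      nlinarith [mul_pos hcre h]
    · exact h.symm
  exact Complex.ext hq0 hqim.symm
end
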